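/- If 0 ∈ K and (u,p) solves the continuous Biot contact problem, then (‖u‖_H² + ‖p‖_Q²)^{1/2} ≤ ‖f_e‖_H + ‖f_f‖_Q. -/
import Mathlib


open scoped RealInnerProductSpace

/-- A priori estimate for the solution of the continuous Biot contact problem
when `0 ∈ K`. -/
theorem stmt_5 {H Q : Type*}
    [NormedAddCommGroup H] [InnerProductSpace ℝ H] [CompleteSpace H]
    [NormedAddCommGroup Q] [InnerProductSpace ℝ Q] [CompleteSpace Q]
    (B : H →L[ℝ] Q) (hB : ‖B‖ ≤ 1)
    (K : Set H) (hK0 : (0 : H) ∈ K) (hK_cl : IsClosed K) (hK_cv : Convex ℝ K)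
    (f_e : H) (f_f : Q) (u : H) (p : Q)
    (hu : u ∈ K)
    (hVI : ∀ v ∈ K, ⟪u, v - u⟫ - ⟪p, B (v - u)⟫ ≥ ⟪f_e, v - u⟫)
    (hEq : ∀ q : Q, -⟪B u, q⟫ - ⟪p, q⟫ = ⟪f_f, q⟫) :
    Real.sqrt (‖u‖ ^ 2 + ‖p‖ ^ 2) ≤ ‖f_e‖ + ‖f_f‖ := by
  have h1 := hVI 0 hK0
  have h2 := hEq p
  rw [zero_sub, map_neg, inner_neg_right, inner_neg_right, inner_neg_right,
    real_inner_self_eq_norm_sq] at h1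
  rw [real_inner_comm p (B u), real_inner_self_eq_norm_sq] at h2
  have key : ‖u‖ ^ 2 + ‖p‖ ^ 2 ≤ ⟪f_e, u⟫ - ⟪f_f, p⟫ := by linarith
  set s := Real.sqrt (‖u‖ ^ 2 + ‖p‖ ^ 2) with hs
  have hsnn : 0 ≤ s := Real.sqrt_nonneg _
  have hs2 : s ^ 2 = ‖u‖ ^ 2 + ‖p‖ ^ 2 := by
    rw [hs, Real.sq_sqrt]; positivity
  have hus : ‖u‖ ≤ s :=
    calc ‖u‖ = Real.sqrt (‖u‖ ^ 2) := (Real.sqrt_sq (norm_nonneg u)).symm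
      _ ≤ s := Real.sqrt_le_sqrt (le_add_of_nonneg_right (sq_nonneg _))
  have hps : ‖p‖ ≤ s :=
    calc ‖p‖ = Real.sqrt (‖p‖ ^ 2) := (Real.sqrt_sq (norm_nonneg p)).symm
      _ ≤ s := Real.sqrt_le_sqrt (le_add_of_nonneg_left (sq_nonneg _))
  have hcs1 : ⟪f_e, u⟫ ≤ ‖f_e‖ * ‖u‖ := real_inner_le_norm _ _
  have hcs2 : -⟪f_f, p⟫ ≤ ‖f_f‖ * ‖p‖ := by
    have := real_inner_le_norm f_f (-p)
    simpa [inner_neg_right] using this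
  have hfe : (0:ℝ) ≤ ‖f_e‖ := norm_nonneg _
  have hff : (0:ℝ) ≤ ‖f_f‖ := norm_nonneg _
  have hbound : s * s ≤ (‖f_e‖ + ‖f_f‖) * s := by
    have e1 : ‖f_e‖ * ‖u‖ ≤ ‖f_e‖ * s := mul_le_mul_of_nonneg_left hus hfe
    have e2 : ‖f_f‖ * ‖p‖ ≤ ‖f_f‖ * s := mul_le_mul_of_nonneg_left hps hff
    have : s * s = ‖u‖ ^ 2 + ‖p‖ ^ 2 := by rw [← sq]; exact hs2
    rw [this]
    calc ‖u‖ ^ 2 + ‖p‖ ^ 2 ≤ ⟪f_e, u⟫ - ⟪f_f, p⟫ := key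
      _ ≤ ‖f_e‖ * s + ‖f_f‖ * s := by linarith
      _ = (‖f_e‖ + ‖f_f‖) * s := by ring
  rcases eq_or_lt_of_le hsnn with h | h
  · rw [← h]; positivity
  · exact le_of_mul_le_mul_right hbound h
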